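/- Let X be an uncountable set and let G be the group of bijections of X with countable support. Then G is binate: for every finitely generated subgroup H ≤ G there exist a homomorphism ψ : H → G with [H, ψ(H)] = 1 and an element t ∈ G such that t⁻¹ ψ(h) t = h ψ(h) for all h ∈ H. -/

import Mathlib

/-- The group of bijections of `X` with countable support, as a subgroup of the
full permutation group. -/
def countableSupport (X : Type*) : Subgroup (Equiv.Perm X) where
  carrier := {σ : Equiv.Perm X | {x : X | σ x ≠ x}.Countable}
  one_mem' := by
    have : {x : X | (1 : Equiv.Perm X) x ≠ x} = ∅ := by
      ext x; simp
    show {x : X | (1 : Equiv.Perm X) x ≠ x}.Countable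
    rw [this]; exact Set.countable_empty
  mul_mem' := by
    intro a b ha hb
    refine (ha.union hb).mono ?_
    intro x hx
    by_cases hbx : b x = x
    · exact Or.inl (by simpa [Equiv.Perm.mul_apply, hbx] using hx)
    · exact Or.inr hbx
  inv_mem' := by
    intro a ha
    refine ha.mono ?_
    intro x hx
    intro h
    exact hx (by nth_rewrite 1 [← h]; exact a.symm_apply_apply x)

/-- The group of countably supported bijections of an uncountable set is binate:
for every finitely generated subgroup `H` there are a homomorphism `ψ : H → G`
whose image commutes elementwise with `H`, and `t ∈ G` conjugating `ψ h` to
`h * ψ h`. -/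
theorem stmt3 {X : Type*} [Uncountable X]
    (H : Subgroup ↥(countableSupport X)) (hH : H.FG) :
    ∃ (ψ : ↥H →* ↥(countableSupport X)) (t : ↥(countableSupport X)),
      (∀ h k : ↥H, Commute ((h : ↥(countableSupport X))) (ψ k)) ∧
      (∀ h : ↥H, t⁻¹ * ψ h * t = (h : ↥(countableSupport X)) * ψ h) := by
  classical
  obtain ⟨T, hT⟩ := hH
  -- the countable set S containing all supports of elements of H
  set S : Set X := ⋃ g ∈ (T : Set ↥(countableSupport X)), {x | (g : Equiv.Perm X) x ≠ x}
    with hSdef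
  have hScount : S.Countable :=
    Set.Countable.biUnion T.countable_toSet (fun g _ => g.2)
  -- every element of H has support inside S
  let K : Subgroup ↥(countableSupport X) :=
  { carrier := {g | ∀ x : X, (g : Equiv.Perm X) x ≠ x → x ∈ S}
    one_mem' := by intro x hx; exact absurd rfl hx
    mul_mem' := by
      intro a b ha hb x hx
      by_cases hbx : (b : Equiv.Perm X) x = x
      · exact ha x (by simpa [Subgroup.coe_mul, Equiv.Perm.mul_apply, hbx] using hx)
      · exact hb x hbx
    inv_mem' := by
      intro a ha x hx
      by_cases hax : (a : Equiv.Perm X) x = x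
      · refine absurd ?_ hx
        simp only [Subgroup.coe_inv]
        nth_rewrite 1 [← hax]
        exact (a : Equiv.Perm X).symm_apply_apply x
      · exact ha x hax }
  have hHK : H ≤ K := by
    rw [← hT]
    refine (Subgroup.closure_le K).2 ?_
    intro g hg x hx
    exact Set.mem_biUnion hg hx
  have hsupp : ∀ (h : ↥H) (x : X), x ∉ S →
      ((h : ↥(countableSupport X)) : Equiv.Perm X) x = x := by
    intro h x hx
    by_contra hne
    exact hx (hHK h.2 x hne)
  have hTmemH : ∀ g ∈ T, (g : ↥(countableSupport X)) ∈ H := by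
    intro g hg; rw [← hT]; exact Subgroup.subset_closure hg
  have hinv : ∀ (h : ↥H) (x : X), x ∈ S →
      ((h : ↥(countableSupport X)) : Equiv.Perm X) x ∈ S := by
    intro h x hx
    simp only [hSdef, Set.mem_iUnion] at hx
    obtain ⟨g, hg, hgx⟩ := hx
    set g' : ↥H := ⟨g, hTmemH g hg⟩ with hg'
    have : ((((h * g' * h⁻¹ : ↥H) : ↥(countableSupport X))) : Equiv.Perm X)
        (((h : ↥(countableSupport X)) : Equiv.Perm X) x)
        ≠ ((h : ↥(countableSupport X)) : Equiv.Perm X) x := by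
      simp only [Subgroup.coe_mul, Subgroup.coe_inv, Equiv.Perm.mul_apply,
        Equiv.Perm.inv_def, Equiv.symm_apply_apply]
      intro hcon
      exact hgx (((h : ↥(countableSupport X)) : Equiv.Perm X).injective hcon)
    exact hHK (h * g' * h⁻¹).2 _ this
  -- build the embedding of countably many copies of S into X
  have hScnt : Countable ↥S := hScount.to_subtype
  have hSccnt : ¬ (Sᶜ : Set X).Countable := by
    intro hc
    have : (Set.univ : Set X).Countable := by
      simpa [Set.union_compl_self] using hScount.union hc
    rw [Set.countable_univ_iff] at this
    exact (not_countable_iff.2 inferInstance).elim this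
  have hScInf : Infinite ↥(Sᶜ : Set X) := by
    rw [Set.infinite_coe_iff]
    exact fun hfin => hSccnt hfin.countable
  obtain ⟨fnat⟩ : Nonempty ((↥S × ℤ) ↪ ℕ) := countable_iff_nonempty_embedding.1 inferInstance
  let f0 : (↥S × ℤ) ↪ ↥(Sᶜ : Set X) := fnat.trans (Infinite.natEmbedding _)
  let efun : ↥S × ℤ → X := fun p => if p.2 = 0 then ↑p.1 else ↑(f0 p)
  have hf0S : ∀ p : ↥S × ℤ, (↑(f0 p) : X) ∉ S := fun p => (f0 p).2
  have einj : Function.Injective efun := by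
    intro p q hpq
    by_cases hp : p.2 = 0 <;> by_cases hq : q.2 = 0 <;>
      simp only [efun, hp, hq, if_pos, if_neg, if_true, if_false] at hpq
    · exact Prod.ext (Subtype.ext hpq) (hp.trans hq.symm)
    · exact absurd (hpq ▸ p.1.2) (hf0S q)
    · exact absurd (hpq.symm ▸ q.1.2) (hf0S p)
    · have := f0.injective (Subtype.ext hpq); exact this
  let ι : (↥S × ℤ) ↪ X := ⟨efun, einj⟩
  have hι0 : ∀ s : ↥S, ι (s, 0) = ↑s := by
    intro s
    show efun (s, 0) = ↑s
    simp [efun]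
  have hιS : ∀ (s : ↥S) (n : ℤ), n ≠ 0 → ι (s, n) ∉ S := by
    intro s n hn
    show efun (s, n) ∉ S
    simp only [efun, if_neg hn]
    exact hf0S _
  have hS_e : ∀ (x : X) (hx : x ∈ S), x = ι (⟨x, hx⟩, 0) := fun x hx => (hι0 ⟨x, hx⟩).symm
  have hnotrange : ∀ x : X, x ∉ Set.range ι → x ∉ S := by
    intro x hx hxS
    exact hx ⟨(⟨x, hxS⟩, 0), (hS_e x hxS).symm⟩
  -- restriction of elements of H to S
  have hresp : ∀ (h : ↥H) (x : X), x ∈ S ↔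
      ((h : ↥(countableSupport X)) : Equiv.Perm X) x ∈ S := by
    intro h x
    constructor
    · exact hinv h x
    · intro hx
      by_contra hxS
      rw [hsupp h x hxS] at hx
      exact hxS hx
  let res : ↥H → Equiv.Perm ↥S := fun h =>
    Equiv.Perm.subtypePerm ((h : ↥(countableSupport X)) : Equiv.Perm X) (fun x => (hresp h x).symm)
  have hres_mul : ∀ h k : ↥H, res (h * k) = res h * res k := by
    intro h k
    ext s
    simp [res, Equiv.Perm.subtypePerm_apply, Subgroup.coe_mul, Equiv.Perm.mul_apply]
    rfl
  let σfun : ↥H → ℤ → Equiv.Perm ↥S := fun h n => if 1 ≤ n then res h else 1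
  let Ψ : ↥H → Equiv.Perm (↥S × ℤ) := fun h => Equiv.prodCongrLeft (fun n => σfun h n)
  let ψraw : ↥H → Equiv.Perm X := fun h => (Ψ h).viaEmbedding ι
  have hψ_apply : ∀ (h : ↥H) (s : ↥S) (n : ℤ), ψraw h (ι (s, n)) = ι (σfun h n s, n) := by
    intro h s n
    have := (Ψ h).viaEmbedding_apply ι (s, n)
    rwa [show (Ψ h) (s, n) = (σfun h n s, n) from rfl] at this
  have hψ_not : ∀ (h : ↥H) (x : X), x ∉ Set.range ι → ψraw h x = x := fun h x hx =>
    (Ψ h).viaEmbedding_apply_of_notMem ι x hx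
  let shiftPerm : Equiv.Perm (↥S × ℤ) := Equiv.prodCongr (Equiv.refl ↥S) (Equiv.addRight (1 : ℤ))
  let traw : Equiv.Perm X := Equiv.Perm.viaEmbedding shiftPerm ι
  have ht_apply : ∀ (s : ↥S) (n : ℤ), traw (ι (s, n)) = ι (s, n + 1) := by
    intro s n
    exact Equiv.Perm.viaEmbedding_apply shiftPerm ι (s, n)
  have ht_not : ∀ x : X, x ∉ Set.range ι → traw x = x := fun x hx =>
    Equiv.Perm.viaEmbedding_apply_of_notMem shiftPerm ι x hx
  have hrangec : (Set.range ι).Countable := Set.countable_range _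
  have hψmem : ∀ h : ↥H, ψraw h ∈ countableSupport X := by
    intro h
    refine hrangec.mono ?_
    intro x hx
    by_contra hxr
    exact hx (hψ_not h x hxr)
  have htmem : traw ∈ countableSupport X := by
    refine hrangec.mono ?_
    intro x hx
    by_contra hxr
    exact hx (ht_not x hxr)
  have hΨmul : ∀ h k : ↥H, Ψ (h * k) = Ψ h * Ψ k := by
    intro h k
    apply Equiv.ext
    rintro ⟨s, n⟩
    show (Ψ (h * k)) (s, n) = (Ψ h) ((Ψ k) (s, n))
    have hσ : σfun (h * k) n = σfun h n * σfun k n := by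
      by_cases h1 : 1 ≤ n <;> simp [σfun, h1, hres_mul]
    show (σfun (h * k) n s, n) = ((Ψ h) (σfun k n s, n))
    rw [hσ]
    rfl
  have hψraw_mul : ∀ h k : ↥H, ψraw (h * k) = ψraw h * ψraw k := by
    intro h k
    show Equiv.Perm.viaEmbeddingHom ι (Ψ (h * k)) =
      Equiv.Perm.viaEmbeddingHom ι (Ψ h) * Equiv.Perm.viaEmbeddingHom ι (Ψ k)
    rw [hΨmul, map_mul]
  have hψ_fixS : ∀ (k : ↥H) (x : X), x ∈ S → ψraw k x = x := by
    intro k x hx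
    conv_lhs => rw [hS_e x hx]
    rw [hψ_apply]
    have : σfun k 0 = 1 := if_neg (by omega)
    rw [this]
    exact (hS_e x hx).symm
  have hψ_notS : ∀ (k : ↥H) (x : X), x ∉ S → ψraw k x ∉ S := by
    intro k x hx
    by_cases hxr : x ∈ Set.range ι
    · obtain ⟨⟨s, n⟩, rfl⟩ := hxr
      have hn : n ≠ 0 := by
        intro hn0; subst hn0; exact hx (by rw [hι0]; exact s.2)
      rw [hψ_apply]
      exact hιS _ n hn
    · rw [hψ_not k x hxr]; exact hx
  -- commutation
  have hcomm : ∀ h k : ↥H, ((h : ↥(countableSupport X)) : Equiv.Perm X) * ψraw k =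
      ψraw k * ((h : ↥(countableSupport X)) : Equiv.Perm X) := by
    intro h k
    ext x
    rw [Equiv.Perm.mul_apply, Equiv.Perm.mul_apply]
    by_cases hx : x ∈ S
    · rw [hψ_fixS k x hx, hψ_fixS k _ (hinv h x hx)]
    · rw [hsupp h x hx, hsupp h _ (hψ_notS k x hx)]
  -- conjugation identity
  have hkey : ∀ h : ↥H, ψraw h * traw =
      traw * (((h : ↥(countableSupport X)) : Equiv.Perm X) * ψraw h) := by
    intro h
    ext x
    rw [Equiv.Perm.mul_apply, Equiv.Perm.mul_apply, Equiv.Perm.mul_apply]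
    by_cases hx : x ∈ Set.range ι
    · obtain ⟨⟨s, n⟩, rfl⟩ := hx
      rw [ht_apply, hψ_apply, hψ_apply]
      by_cases hn : n = 0
      · subst hn
        have h0 : σfun h 0 = 1 := if_neg (by omega)
        have h1 : σfun h (0 + 1) = res h := if_pos (by omega)
        rw [h0, h1]
        simp only [Equiv.Perm.one_apply]
        rw [hι0]
        have : ((h : ↥(countableSupport X)) : Equiv.Perm X) ↑s = ↑(res h s) := rfl
        rw [this, ← hι0 (res h s), ht_apply]
      · have hfix : ((h : ↥(countableSupport X)) : Equiv.Perm X) (ι (σfun h n s, n))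
            = ι (σfun h n s, n) := hsupp h _ (hιS _ n hn)
        rw [hfix, ht_apply]
        have : σfun h (n + 1) = σfun h n := by
          have h1 : (1 ≤ n + 1) ↔ (1 ≤ n) := by omega
          simp only [σfun, h1]
        rw [this]
    · have hxS : x ∉ S := hnotrange x hx
      rw [ht_not x hx, hψ_not h x hx, hsupp h x hxS, ht_not x hx]
  -- assemble
  refine ⟨MonoidHom.mk' (fun h => ⟨ψraw h, hψmem h⟩) (fun h k => Subtype.ext (hψraw_mul h k)),
    ⟨traw, htmem⟩, ?_, ?_⟩
  · intro h k
    exact Subtype.ext (hcomm h k)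
  · intro h
    have k2 : (⟨ψraw h, hψmem h⟩ : ↥(countableSupport X)) * ⟨traw, htmem⟩ =
        ⟨traw, htmem⟩ * ((h : ↥(countableSupport X)) * ⟨ψraw h, hψmem h⟩) :=
      Subtype.ext (hkey h)
    show (⟨traw, htmem⟩ : ↥(countableSupport X))⁻¹ * ⟨ψraw h, hψmem h⟩ * ⟨traw, htmem⟩ = _
    rw [mul_assoc, k2, inv_mul_cancel_left]
    rfl
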